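/- If Δ is a Cayley digraph for a group H and ℤ(Δ,k) is connected, then the wreath-type group H^k ⋊ ℤ (where the generator of ℤ cyclically permutes the k factors of H^k and shifts the ℤ-coordinate) acts regularly on the vertices of ℤ(Δ,k); hence ℤ(Δ,k) is a Cayley digraph for H^k ⋊ ℤ. -/

import Mathlib

/-- Arc relation of the digraph `ℤ(Δ,k)`: vertex set `ℤ × V^k` (coordinates
indexed by `ZMod k`), with `((i; v), (i+1; w))` an arc iff `v j = w j` for all
`j ≢ i (mod k)` and `(v j, w j)` an arc of `Δ` for `j ≡ i (mod k)`. -/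
def ZArc {V : Type*} (E : V → V → Prop) (k : ℕ) [NeZero k]
    (u v : ℤ × (ZMod k → V)) : Prop :=
  v.1 = u.1 + 1 ∧ ∀ j : ZMod k,
    ((u.1 : ZMod k) ≠ j → u.2 j = v.2 j) ∧
    ((u.1 : ZMod k) = j → E (u.2 j) (v.2 j))

/-- The digraph with arc relation `E` is connected (its underlying undirected
graph is connected). -/
def DConnected {α : Type*} (E : α → α → Prop) : Prop :=
  ∀ u v, Relation.ReflTransGen (fun a b => E a b ∨ E b a) u v

/-- The cyclic-shift automorphism of `H^k`. -/
def shiftAut (k : ℕ) [NeZero k] (H : Type*) [Group H] :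
    MulAut (ZMod k → H) where
  toFun x := fun j => x (j - 1)
  invFun x := fun j => x (j + 1)
  left_inv x := by funext j; simp
  right_inv x := by funext j; simp
  map_mul' x y := rfl

section Aux
variable {k : ℕ} [NeZero k] {H : Type*} [Group H]

lemma shiftAut_apply (a : ZMod k → H) (j : ZMod k) :
    shiftAut k H a j = a (j - 1) := rfl

lemma shiftAut_inv_apply (a : ZMod k → H) (j : ZMod k) :
    (shiftAut k H)⁻¹ a j = a (j + 1) := rfl

lemma shiftAut_zpow (n : ℤ) (a : ZMod k → H) (j : ZMod k) :
    ((shiftAut k H ^ n) a) j = a (j - n) := by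
  induction n using Int.induction_on generalizing a j with
  | zero => simp
  | succ m ih =>
      rw [zpow_add_one]
      show ((shiftAut k H ^ (m : ℤ)) (shiftAut k H a)) j = _
      rw [ih, shiftAut_apply]
      congr 1
      push_cast
      ring
  | pred m ih =>
      rw [zpow_sub_one]
      show ((shiftAut k H ^ (-m : ℤ)) ((shiftAut k H)⁻¹ a)) j = _
      rw [ih, shiftAut_inv_apply]
      congr 1
      push_cast
      ring

/-- right translation perm -/
def tauPerm (a : ZMod k → H) : Equiv.Perm (ℤ × (ZMod k → H)) where
  toFun p := (p.1, fun j => p.2 j * (a j)⁻¹)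
  invFun p := (p.1, fun j => p.2 j * a j)
  left_inv p := by ext <;> simp
  right_inv p := by ext <;> simp

/-- shift perm -/
def sigmaPerm (k : ℕ) [NeZero k] (H : Type*) (n : ℤ) :
    Equiv.Perm (ℤ × (ZMod k → H)) where
  toFun p := (p.1 + n, fun j => p.2 (j - n))
  invFun p := (p.1 - n, fun j => p.2 (j + n))
  left_inv p := by ext <;> simp
  right_inv p := by ext <;> simp

def tauHom : (ZMod k → H) →* Equiv.Perm (ℤ × (ZMod k → H)) where
  toFun := tauPerm
  map_one' := by ext p <;> simp [tauPerm]
  map_mul' a b := by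
    ext p
    · rfl
    · simp [tauPerm, mul_assoc]

def sigmaHom : Multiplicative ℤ →* Equiv.Perm (ℤ × (ZMod k → H)) where
  toFun n := sigmaPerm k H n.toAdd
  map_one' := by ext p <;> simp [sigmaPerm]
  map_mul' m n := by
    apply Equiv.ext; intro p
    refine Prod.ext ?_ ?_
    · show p.1 + (m.toAdd + n.toAdd) = p.1 + n.toAdd + m.toAdd
      ring
    · funext j
      show p.2 (j - ((m.toAdd + n.toAdd : ℤ) : ZMod k)) = p.2 (j - m.toAdd - n.toAdd)
      push_cast
      ring_nf

lemma compat : ∀ g : Multiplicative ℤ,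
    (tauHom (k := k) (H := H)).comp
      ((zpowersHom (MulAut (ZMod k → H)) (shiftAut k H) g).toMonoidHom)
    = (MulAut.conj (sigmaHom g)).toMonoidHom.comp tauHom := by
  intro g
  apply MonoidHom.ext; intro a
  apply Equiv.ext; intro p
  refine Prod.ext ?_ ?_
  · show p.1 = p.1 - g.toAdd + g.toAdd
    ring
  · funext j
    show p.2 j * ((shiftAut k H ^ g.toAdd) a j)⁻¹
        = p.2 (j - g.toAdd + g.toAdd) * (a (j - g.toAdd))⁻¹
    rw [shiftAut_zpow]
    congr 2
    ring

end Aux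


/-- If `Δ` is a Cayley digraph of a group `H` (with connection set `S`) and
`ℤ(Δ,k)` is connected, then the group `H^k ⋊ ℤ`, where the generator of `ℤ`
cyclically permutes the factors of `H^k`, acts regularly on `ℤ(Δ,k)` by
automorphisms; hence `ℤ(Δ,k)` is a Cayley digraph of `H^k ⋊ ℤ`. -/
theorem stmt_17 (H : Type*) [Group H] (S : Set H) (k : ℕ) [NeZero k]
    (E : H → H → Prop) (hE : E = fun g h => ∃ s ∈ S, h = s * g)
    (hconn : DConnected (ZArc E k)) :
    ∃ act : ((ZMod k → H) ⋊[zpowersHom (MulAut (ZMod k → H)) (shiftAut k H)]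
        Multiplicative ℤ) →* Equiv.Perm (ℤ × (ZMod k → H)),
      (∀ g, ∀ u v : ℤ × (ZMod k → H),
        ZArc E k u v ↔ ZArc E k (act g u) (act g v)) ∧
      (∀ u v : ℤ × (ZMod k → H), ∃! g, act g u = v) := by
  classical
  set act := SemidirectProduct.lift (tauHom (k := k) (H := H)) sigmaHom compat with hact
  have act_apply : ∀ g p, act g p =
      (p.1 + g.right.toAdd, fun j => p.2 (j - g.right.toAdd) * (g.left j)⁻¹) := by
    intro g p
    conv_lhs => rw [← SemidirectProduct.inl_left_mul_inr_right g]
    rw [map_mul, hact, SemidirectProduct.lift_inl, SemidirectProduct.lift_inr]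
    rfl
  refine ⟨act, ?_, ?_⟩
  · intro g u v
    subst hE
    rw [act_apply, act_apply]
    simp only [ZArc]
    set n : ℤ := g.right.toAdd with hn
    set a := g.left with ha
    constructor
    · rintro ⟨h1, h2⟩
      refine ⟨by omega, fun j => ?_⟩
      obtain ⟨e1, e2⟩ := h2 (j - n)
      constructor
      · intro hne
        have : (u.1 : ZMod k) ≠ j - n := by
          intro h; apply hne
          show ((u.1 + n : ℤ) : ZMod k) = j
          push_cast
          rw [h]; ring
        rw [e1 this]
      · intro heq
        have heq' : (u.1 : ZMod k) = j - n := by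
          have h' : ((u.1 : ZMod k)) + (n : ZMod k) = j := by
            have : ((u.1 + n : ℤ) : ZMod k) = j := heq
            push_cast at this
            exact this
          rw [← h']; ring
        obtain ⟨s, hs, hsv⟩ := e2 heq'
        exact ⟨s, hs, by rw [hsv, mul_assoc]⟩
    · rintro ⟨h1, h2⟩
      refine ⟨by omega, fun j => ?_⟩
      obtain ⟨e1, e2⟩ := h2 (j + n)
      have harg : j + (n : ZMod k) - n = j := by ring
      constructor
      · intro hne
        have hne' : ((u.1 + n : ℤ) : ZMod k) ≠ j + n := by
          intro h
          apply hne
          push_cast at h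
          have := add_right_cancel h
          exact this
        have := e1 hne'
        rw [harg] at this
        exact mul_right_cancel this
      · intro heq
        have heq' : ((u.1 + n : ℤ) : ZMod k) = j + n := by
          push_cast
          rw [heq]
        obtain ⟨s, hs, hsv⟩ := e2 heq'
        rw [harg] at hsv
        refine ⟨s, hs, ?_⟩
        rw [← mul_assoc] at hsv
        exact mul_right_cancel hsv
  · intro u v
    set n : ℤ := v.1 - u.1 with hn_def
    set a : ZMod k → H := fun j => (v.2 j)⁻¹ * u.2 (j - n) with ha_def
    refine ⟨⟨a, Multiplicative.ofAdd n⟩, ?_, ?_⟩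
    · show act ⟨a, Multiplicative.ofAdd n⟩ u = v
      rw [act_apply]
      refine Prod.ext ?_ ?_
      · show u.1 + n = v.1
        omega
      · funext j
        show u.2 (j - n) * ((v.2 j)⁻¹ * u.2 (j - n))⁻¹ = v.2 j
        group
    · intro g hg
      rw [act_apply] at hg
      have h1 : u.1 + g.right.toAdd = v.1 := congrArg Prod.fst hg
      have hn : g.right.toAdd = n := by omega
      have h2 : (fun j => u.2 (j - g.right.toAdd) * (g.left j)⁻¹) = v.2 :=
        congrArg Prod.snd hg
      refine SemidirectProduct.ext ?_ ?_
      · funext j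
        have h3 := congrFun h2 j
        rw [hn] at h3
        show g.left j = (v.2 j)⁻¹ * u.2 (j - n)
        rw [← h3]
        group
      · show g.right = Multiplicative.ofAdd n
        rw [← hn]
        rfl
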